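/- Fix a > b > 0. The limit as ρ → 0⁺ of η(ρ,a,b) equals (a+b)/2 - τ·log(e√(ab)/τ), where τ = (a-b)/log(a/b) and η is the asymmetric SBM threshold function. -/
import Mathlib


open Filter Topology

/-- As `ρ → 0⁺`, the asymmetric-SBM threshold `η(ρ,a,b)` converges to
`(a+b)/2 - τ·log(e√(ab)/τ)`. -/
theorem eta_limit_zero (a b τ : ℝ) (γ η : ℝ → ℝ) (ha : 0 < b) (hab : b < a)
    (hτ : τ = (a - b) / Real.log (a / b))
    (hγ : ∀ ρ : ℝ, γ ρ = Real.sqrt ((1 - 2 * ρ) ^ 2 * τ ^ 2 + 4 * ρ * (1 - ρ) * a * b))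
    (hη : ∀ ρ : ℝ, η ρ = (a + b) / 2 - γ ρ +
      (1 - 2 * ρ) * τ / 2 *
        Real.log ((γ ρ + (1 - 2 * ρ) * τ) * ρ / ((γ ρ - (1 - 2 * ρ) * τ) * (1 - ρ)))) :
    Tendsto η (𝓝[>] (0 : ℝ))
      (𝓝 ((a + b) / 2 - τ * Real.log (Real.exp 1 * Real.sqrt (a * b) / τ))) := by
  have ha' : 0 < a := ha.trans hab
  have hτ0 : 0 < τ := by
    rw [hτ]
    exact div_pos (sub_pos.2 hab) (Real.log_pos ((one_lt_div ha).2 hab))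
  set G : ℝ → ℝ := fun ρ => Real.sqrt ((1 - 2 * ρ) ^ 2 * τ ^ 2 + 4 * ρ * (1 - ρ) * a * b)
    with hG
  set g : ℝ → ℝ := fun ρ => (a + b) / 2 - G ρ +
      (1 - 2 * ρ) * τ / 2 *
        Real.log ((G ρ + (1 - 2 * ρ) * τ) ^ 2 / (4 * (1 - ρ) ^ 2 * (a * b))) with hg
  -- η eventually equals g on (0, 1/2)
  have heq : η =ᶠ[𝓝[>] (0:ℝ)] g := by
    filter_upwards [Ioo_mem_nhdsGT_of_mem (by norm_num : (0:ℝ) ∈ Set.Ico 0 (1/2))] with ρ hρ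
    obtain ⟨hρ0, hρh⟩ := hρ
    have h1ρ : 0 < 1 - ρ := by linarith
    have hc : 0 < (1 - 2 * ρ) * τ := by
      have : 0 < 1 - 2 * ρ := by linarith
      positivity
    have hargnn : 0 ≤ (1 - 2 * ρ) ^ 2 * τ ^ 2 + 4 * ρ * (1 - ρ) * a * b := by positivity
    have hG2 : G ρ ^ 2 = (1 - 2 * ρ) ^ 2 * τ ^ 2 + 4 * ρ * (1 - ρ) * a * b :=
      Real.sq_sqrt hargnn
    have hGnn : 0 ≤ G ρ := Real.sqrt_nonneg _
    have hpos : 0 < 4 * ρ * (1 - ρ) * a * b := by positivity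
    have hGc : (1 - 2 * ρ) * τ < G ρ := by
      have h1 : Real.sqrt (((1 - 2 * ρ) * τ) ^ 2) < G ρ := by
        apply Real.sqrt_lt_sqrt (by positivity)
        nlinarith
      rwa [Real.sqrt_sq hc.le] at h1
    have key : (G ρ + (1 - 2 * ρ) * τ) * ρ / ((G ρ - (1 - 2 * ρ) * τ) * (1 - ρ))
        = (G ρ + (1 - 2 * ρ) * τ) ^ 2 / (4 * (1 - ρ) ^ 2 * (a * b)) := by
      rw [div_eq_div_iff (mul_pos (sub_pos.2 hGc) h1ρ).ne' (by positivity)]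
      linear_combination (-(G ρ + (1 - 2 * ρ) * τ) * (1 - ρ)) * hG2
    rw [hη, hγ, key]
  rw [tendsto_congr' heq]
  -- g is continuous at 0
  have hGcont : Continuous G := by
    apply Real.continuous_sqrt.comp
    fun_prop
  have hG0 : G 0 = τ := by
    simp only [hG]
    norm_num
    rw [Real.sqrt_sq hτ0.le]
  have harg : ContinuousAt (fun ρ => (G ρ + (1 - 2 * ρ) * τ) ^ 2 / (4 * (1 - ρ) ^ 2 * (a * b))) 0 := by
    apply ContinuousAt.div
    · exact ((hGcont.continuousAt.add (by fun_prop)).pow 2)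
    · fun_prop
    · positivity
  have hlogc : ContinuousAt (fun ρ => Real.log ((G ρ + (1 - 2 * ρ) * τ) ^ 2 / (4 * (1 - ρ) ^ 2 * (a * b)))) 0 := by
    apply (Real.continuousAt_log ?_).comp harg
    simp only [hG0]
    positivity
  have hgc : ContinuousAt g 0 := by
    apply ContinuousAt.add
    · exact continuousAt_const.sub hGcont.continuousAt
    · exact ContinuousAt.mul (by fun_prop) hlogc
  have htend : Tendsto g (𝓝[>] (0:ℝ)) (𝓝 (g 0)) := hgc.continuousWithinAt.tendsto
  have hval : g 0 = (a + b) / 2 - τ * Real.log (Real.exp 1 * Real.sqrt (a * b) / τ) := by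
    simp only [hg, hG0]
    norm_num
    have h2 : (τ + τ) ^ 2 / (4 * (a * b)) = τ ^ 2 / (a * b) := by
      field_simp; ring
    rw [h2]
    have habpos : 0 < a * b := by positivity
    rw [Real.log_div (by positivity) habpos.ne', Real.log_pow,
      Real.log_div (by positivity) hτ0.ne', Real.log_mul (Real.exp_ne_zero 1)
        (by positivity), Real.log_exp, Real.log_sqrt habpos.le]
    ring
  rwa [hval] at htend
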